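/- arXiv:2511.04125 — 3 statements merged into one kernel-verified Lean document; each statement's English description precedes it below -/
import Mathlib

section
/- Let a be a prime, b < a, and let V ∈ Z^{(a-1) × b} be the (a,b) reduced Vandermonde matrix with V_{i,j} = (i^{j-1} mod a). If v ∈ Z^{a-1} is a nonzero vector with vV = 0, then v has more than b nonzero entries. -/
/-- The `(a, b)` reduced Vandermonde matrix: `V i j = (i+1)^j mod a`. -/
def rvdm (a b : ℕ) : Matrix (Fin (a - 1)) (Fin b) ℤ :=
  Matrix.of fun i j => (((i.val + 1) ^ j.val % a : ℕ) : ℤ)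

/-- If `v ≠ 0` and `v V = 0` for the `(a,b)` reduced Vandermonde matrix `V`
    (with `a` prime, `b < a`), then `v` has more than `b` nonzero entries. -/
theorem stmt5 (a b : ℕ) (ha : Nat.Prime a) (hb : b < a)
    (v : Fin (a - 1) → ℤ) (hv : v ≠ 0)
    (hker : Matrix.vecMul v (rvdm a b) = 0) :
    b < (Finset.univ.filter fun i => v i ≠ 0).card := by
  haveI : Fact (Nat.Prime a) := ⟨ha⟩
  by_contra hle
  push_neg at hle
  set s : Finset (Fin (a-1)) := Finset.univ.filter fun i => v i ≠ 0 with hs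
  set k := s.card with hk
  have hkb : k ≤ b := hle
  let e := s.orderEmbOfFin (rfl : s.card = k)
  have he : ∀ p, e p ∈ s := fun p => s.orderEmbOfFin_mem rfl p
  set M : Matrix (Fin k) (Fin k) ℤ := fun p q => rvdm a b (e p) (Fin.castLE hkb q) with hM
  -- the matrix mod a is a Vandermonde matrix with distinct entries
  have hdet : M.det ≠ 0 := by
    intro h0
    have hcast : (M.map (Int.cast : ℤ → ZMod a)).det = 0 := by
      have h2 := (Int.castRingHom (ZMod a)).map_det M
      simp only [RingHom.mapMatrix_apply, Int.coe_castRingHom] at h2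
      rw [← h2, h0]
      simp
    have hvand : M.map (Int.cast : ℤ → ZMod a)
        = Matrix.vandermonde (fun p : Fin k => (((e p : Fin (a-1)).val + 1 : ℕ) : ZMod a)) := by
      ext p q
      simp only [Matrix.map_apply, hM, rvdm, Matrix.of_apply, Matrix.vandermonde_apply]
      simp only [Matrix.map, Matrix.of_apply]
      push_cast [ZMod.natCast_mod]
      simp
    have hinj : Function.Injective
        (fun p : Fin k => (((e p : Fin (a-1)).val + 1 : ℕ) : ZMod a)) := by
      intro p q hpq
      have h1 : ((e p : Fin (a-1)).val + 1) % a = ((e q : Fin (a-1)).val + 1) % a :=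
        (ZMod.natCast_eq_natCast_iff' _ _ _).mp hpq
      have hlt : ∀ p : Fin k, (e p : Fin (a-1)).val + 1 < a := fun p => by
        have := (e p : Fin (a-1)).isLt
        omega
      rw [Nat.mod_eq_of_lt (hlt p), Nat.mod_eq_of_lt (hlt q)] at h1
      exact e.injective (Fin.val_injective (by omega))
    rw [hvand] at hcast
    exact Matrix.det_vandermonde_ne_zero_iff.mpr hinj hcast
  -- the restricted vector kills M
  have hw : Matrix.vecMul (fun p => v (e p)) M = 0 := by
    funext q
    have h1 : Matrix.vecMul v (rvdm a b) (Fin.castLE hkb q) = 0 := by rw [hker]; rfl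
    rw [Matrix.vecMul] at h1 ⊢
    simp only [dotProduct, Pi.zero_apply] at h1 ⊢
    rw [← h1]
    rw [← Finset.sum_filter_of_ne (p := fun i => v i ≠ 0)
      (f := fun i => v i * rvdm a b i (Fin.castLE hkb q))
      (fun i _ h => by intro h0; exact h (by simp [h0]))]
    have himg : Finset.univ.image e = s := by
      apply Finset.coe_injective
      rw [Finset.coe_image, Finset.coe_univ, Set.image_univ]
      exact Finset.range_orderEmbOfFin s rfl
    have h3 := Finset.sum_image (g := ⇑e) (s := Finset.univ)
      (f := fun i => v i * rvdm a b i (Fin.castLE hkb q)) (fun x _ y _ h => e.injective h)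
    rw [himg] at h3
    exact h3.symm
  have hzero : (fun p => v (e p)) = 0 := Matrix.eq_zero_of_vecMul_eq_zero hdet hw
  obtain ⟨i, hi⟩ : ∃ i, v i ≠ 0 := Function.ne_iff.mp hv
  have hi' : i ∈ s := by simp [hs, hi]
  have : i ∈ Set.range e := by rw [Finset.range_orderEmbOfFin]; exact hi'
  obtain ⟨p, hp⟩ := this
  exact hi (by rw [← hp]; exact congrFun hzero p)
end

section
/- Let Y ∈ {±1}^{k × m} have pairwise orthogonal rows, let v ∈ Z^k with ‖v‖_0 ≥ L, and suppose all nonzero coordinates of vY lie within a set of columns of size at most m' ≤ m. Then for p > 2: ‖vY‖_p ≥ (m')^{1/p - 1/2} · (m·L)^{1/2}. -/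
/-- Anti-concentration: if `Y ∈ {±1}^{k×m}` has pairwise orthogonal rows,
    `‖v‖₀ ≥ L`, and all nonzero coordinates of `vY` lie in a set of at most `m' ≤ m`
    columns, then for `p > 2`, `‖vY‖_p ≥ (m')^{1/p-1/2} (m·L)^{1/2}`. -/
theorem stmt15 (k m m' L : ℕ) (Y : Matrix (Fin k) (Fin m) ℤ)
    (hY : ∀ i j, Y i j = 1 ∨ Y i j = -1)
    (horth : ∀ i j, i ≠ j → ∑ l, Y i l * Y j l = 0)
    (v : Fin k → ℤ)
    (hL : L ≤ (Finset.univ.filter fun i => v i ≠ 0).card)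
    (S : Finset (Fin m)) (hS : S.card ≤ m') (hm' : m' ≤ m)
    (hsupp : ∀ j ∉ S, Matrix.vecMul v Y j = 0)
    (p : ℝ) (hp : 2 < p) :
    (∑ j, |((Matrix.vecMul v Y j : ℤ) : ℝ)| ^ p) ^ (1 / p)
      ≥ (m' : ℝ) ^ (1 / p - 1 / 2) * ((m : ℝ) * L) ^ ((1 : ℝ) / 2) := by
  set w : Fin m → ℝ := fun j => |((Matrix.vecMul v Y j : ℤ) : ℝ)| with hw
  have hwnn : ∀ j, 0 ≤ w j := fun j => abs_nonneg _
  have hp0 : 0 < p := by linarith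
  -- Key orthogonality computation in ℤ
  have key : ∑ j, (Matrix.vecMul v Y j) ^ 2 = (m : ℤ) * ∑ i, (v i) ^ 2 := by
    have hvm : ∀ j, Matrix.vecMul v Y j = ∑ i, v i * Y i j := by
      intro j
      simp [Matrix.vecMul, dotProduct]
    calc ∑ j, (Matrix.vecMul v Y j) ^ 2
        = ∑ j, ∑ i, ∑ i', (v i * Y i j) * (v i' * Y i' j) := by
          simp_rw [hvm, sq, Finset.sum_mul_sum]
      _ = ∑ i, ∑ i', (v i * v i') * ∑ j, Y i j * Y i' j := by
          rw [Finset.sum_comm]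
          refine Finset.sum_congr rfl fun i _ => ?_
          rw [Finset.sum_comm]
          refine Finset.sum_congr rfl fun i' _ => ?_
          rw [Finset.mul_sum]
          refine Finset.sum_congr rfl fun j _ => by ring
      _ = ∑ i, (v i * v i) * (m : ℤ) := by
          refine Finset.sum_congr rfl fun i _ => ?_
          rw [Finset.sum_eq_single_of_mem i (Finset.mem_univ i)]
          · congr 1
            have : ∀ j, Y i j * Y i j = 1 := by
              intro j; rcases hY i j with h | h <;> rw [h] <;> ring
            simp [this]
          · intro i' _ hne
            rw [horth i i' (Ne.symm hne), mul_zero]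
      _ = (m : ℤ) * ∑ i, (v i) ^ 2 := by
          rw [Finset.mul_sum]
          exact Finset.sum_congr rfl fun i _ => by ring
  -- lower bound on sum of squares of v
  have hv2 : (L : ℤ) ≤ ∑ i, (v i) ^ 2 := by
    calc (L : ℤ) ≤ ((Finset.univ.filter fun i => v i ≠ 0).card : ℤ) := by exact_mod_cast hL
      _ = ∑ i ∈ Finset.univ.filter fun i => v i ≠ 0, (1 : ℤ) := by
          rw [Finset.sum_const, nsmul_eq_mul, mul_one]
      _ ≤ ∑ i ∈ Finset.univ.filter fun i => v i ≠ 0, (v i) ^ 2 := by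
          refine Finset.sum_le_sum fun i hi => ?_
          have : v i ≠ 0 := (Finset.mem_filter.mp hi).2
          have h1 : 1 ≤ |v i| := Int.one_le_abs (by omega)
          calc (1:ℤ) = 1 * 1 := by ring
            _ ≤ |v i| * |v i| := mul_le_mul h1 h1 (by norm_num) (abs_nonneg _)
            _ = (v i) ^ 2 := by rw [← abs_mul, ← sq, abs_sq]
      _ ≤ ∑ i, (v i) ^ 2 := Finset.sum_le_sum_of_subset_of_nonneg
          (Finset.filter_subset _ _) (fun i _ _ => sq_nonneg _)
  -- sum of squares of w over S, as reals
  have hA : (m : ℝ) * L ≤ ∑ j ∈ S, w j ^ (2 : ℝ) := by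
    have : ∑ j ∈ S, w j ^ (2 : ℝ) = ∑ j, w j ^ (2 : ℝ) := by
      refine Finset.sum_subset (Finset.subset_univ S) ?_
      intro j _ hj
      simp [hw, hsupp j hj, Real.zero_rpow (by norm_num : (2:ℝ) ≠ 0)]
    rw [this]
    have : ∑ j, w j ^ (2 : ℝ) = ((∑ j, (Matrix.vecMul v Y j) ^ 2 : ℤ) : ℝ) := by
      push_cast
      refine Finset.sum_congr rfl fun j _ => ?_
      rw [hw]
      rw [Real.rpow_two, sq_abs]
    rw [this, key]
    push_cast
    have : (L : ℝ) ≤ ((∑ i, (v i) ^ 2 : ℤ) : ℝ) := by exact_mod_cast hv2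
    push_cast at this
    have hm : (0:ℝ) ≤ (m:ℝ) := Nat.cast_nonneg m
    nlinarith
  -- trivial case m * L = 0
  rcases eq_or_lt_of_le (by positivity : (0:ℝ) ≤ (m:ℝ) * L) with hml | hml
  · rw [← hml, Real.zero_rpow (by norm_num : (1/2 : ℝ) ≠ 0), mul_zero]
    positivity
  -- now m * L > 0, so S is nonempty and m' ≥ 1
  have hSpos : 0 < ∑ j ∈ S, w j ^ (2 : ℝ) := lt_of_lt_of_le hml hA
  have hm'pos : (0:ℝ) < m' := by
    by_contra h
    push_neg at h
    have : m' = 0 := by exact_mod_cast le_antisymm h (Nat.cast_nonneg m')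
    have : S = ∅ := Finset.card_eq_zero.mp (le_antisymm (this ▸ hS) (Nat.zero_le _))
    rw [this] at hSpos
    simp at hSpos
  -- Hölder with exponents p/2 and its conjugate
  have hpq : (p/2).HolderConjugate ((p/2)/(p/2-1)) :=
    Real.HolderConjugate.conjExponent (by linarith)
  have holder := Real.inner_le_Lp_mul_Lq_of_nonneg (f := fun j => w j ^ (2:ℝ))
    (g := fun _ => (1:ℝ)) S hpq (fun j _ => by positivity) (fun j _ => by norm_num)
  simp only [mul_one, Real.one_rpow, Finset.sum_const, nsmul_eq_mul] at holder
  have hq1 : (1 : ℝ) / ((p/2)/(p/2-1)) = 1 - 2/p := by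
    field_simp
  have hexp : ∀ j, (w j ^ (2:ℝ)) ^ (p/2) = w j ^ p := by
    intro j
    rw [← Real.rpow_mul (hwnn j), show (2:ℝ) * (p/2) = p by ring]
  simp only [hexp, hq1] at holder
  set T : ℝ := ∑ j, w j ^ p with hT
  have hTnn : 0 ≤ T := Finset.sum_nonneg fun j _ => by positivity
  have hTS : ∑ j ∈ S, w j ^ p ≤ T :=
    Finset.sum_le_sum_of_subset_of_nonneg (Finset.subset_univ S)
      (fun j _ _ => by positivity)
  have h2p : (0:ℝ) < 1 - 2/p := by
    rw [sub_pos, div_lt_one hp0]; linarith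
  have hcard : (S.card : ℝ) ^ (1 - 2/p) ≤ (m' : ℝ) ^ (1 - 2/p) :=
    Real.rpow_le_rpow (Nat.cast_nonneg _) (by exact_mod_cast hS) (le_of_lt h2p)
  have h12 : (1:ℝ)/(p/2) = 2/p := by field_simp
  rw [h12] at holder
  have hstep : (m:ℝ) * L ≤ T ^ (2/p) * (m' : ℝ) ^ (1 - 2/p) := by
    refine le_trans hA (le_trans holder ?_)
    have hTp : (∑ j ∈ S, w j ^ p) ^ (2/p) ≤ T ^ (2/p) :=
      Real.rpow_le_rpow (Finset.sum_nonneg fun j _ => by positivity) hTS (by positivity)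
    exact mul_le_mul hTp hcard (by positivity) (by positivity)
  have hstep2 : ((m:ℝ) * L) * (m' : ℝ) ^ (2/p - 1) ≤ T ^ (2/p) := by
    rw [show (2/p - 1 : ℝ) = -(1 - 2/p) by ring, Real.rpow_neg (le_of_lt hm'pos),
      ← div_eq_mul_inv, div_le_iff₀ (Real.rpow_pos_of_pos hm'pos _)]
    exact hstep
  have hfin := Real.rpow_le_rpow (by positivity) hstep2 (by norm_num : (0:ℝ) ≤ 1/2)
  rw [← Real.rpow_mul hTnn, Real.mul_rpow (by positivity) (by positivity),
    ← Real.rpow_mul (le_of_lt hm'pos)] at hfin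
  have e1 : (2/p) * (1/2) = 1/p := by
    field_simp
  have e2 : (2/p - 1) * (1/2) = 1/p - 1/2 := by ring
  rw [e1, e2] at hfin
  rw [ge_iff_le, mul_comm]
  exact hfin
end

section
/- Let a CSP have M constraints of arity q over alphabet Σ. Suppose there is a set T of constraints with |T| ≥ K, and for each constraint t ∈ T, a designated satisfying assignment σ_t of its q variables, such that every variable x appearing in any constraint of T has at most h distinct values indicated across all the designated assignments {σ_t : t ∈ T, t contains x}. Then there exists a global assignment satisfying at least K/h^q constraints. -/
/-- Subselection: if at least `K` constraints have designated satisfying assignments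
    and every variable gets at most `h` distinct designated values, then some global
    assignment satisfies at least `K/h^q` constraints. -/
theorem stmt17 {A : Type*} [Nonempty A] [DecidableEq A] (M N q K h : ℕ)
    (vars : Fin M → Finset (Fin N))
    (hq : ∀ t, (vars t).card = q)
    (sat : Fin M → (Fin N → A) → Prop)
    (hlocal : ∀ t σ σ', (∀ x ∈ vars t, σ x = σ' x) → (sat t σ ↔ sat t σ'))
    (T : Finset (Fin M)) (hK : K ≤ T.card)
    (σd : Fin M → Fin N → A)
    (hσd : ∀ t ∈ T, sat t (σd t))
    (hh : ∀ x : Fin N,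
      ((T.filter fun t => x ∈ vars t).image fun t => σd t x).card ≤ h) :
    ∃ σ : Fin N → A,
      (K : ℝ) / (h : ℝ) ^ q ≤ (Nat.card {t : Fin M // sat t σ} : ℝ) := by
  classical
  rcases Nat.eq_zero_or_pos (h ^ q) with hq0 | hqpos
  · refine ⟨fun _ => Classical.arbitrary A, ?_⟩
    have h0 : (h : ℝ) ^ q = 0 := by
      have : ((h ^ q : ℕ) : ℝ) = 0 := by rw [hq0]; simp
      simpa using this
    rw [h0, div_zero]
    positivity
  · set S : Fin N → Finset A := fun x =>
      if hx : ((T.filter fun t => x ∈ vars t).image fun t => σd t x).Nonempty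
      then (T.filter fun t => x ∈ vars t).image fun t => σd t x
      else {Classical.arbitrary A} with hS
    have hSne : ∀ x, (S x).Nonempty := by
      intro x; rw [hS]; dsimp only; split
      · assumption
      · exact Finset.singleton_nonempty _
    have hSmem : ∀ t ∈ T, ∀ x ∈ vars t, σd t x ∈ S x := by
      intro t ht x hx
      have hmem : σd t x ∈ (T.filter fun t => x ∈ vars t).image fun t => σd t x :=
        Finset.mem_image_of_mem _ (Finset.mem_filter.mpr ⟨ht, hx⟩)
      rw [hS]; dsimp only; rw [dif_pos ⟨_, hmem⟩]; exact hmem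
    have hScard : ∀ t ∈ T, ∀ x ∈ vars t, (S x).card ≤ h := by
      intro t ht x hx
      have hmem : σd t x ∈ (T.filter fun t => x ∈ vars t).image fun t => σd t x :=
        Finset.mem_image_of_mem _ (Finset.mem_filter.mpr ⟨ht, hx⟩)
      rw [hS]; dsimp only; rw [dif_pos ⟨_, hmem⟩]; exact hh x
    set P : Finset (Fin N → A) := Fintype.piFinset S with hP
    have hPcard : P.card = ∏ x, (S x).card := Fintype.card_piFinset S
    have key : ∀ t ∈ T, ∏ x, (S x).card ≤ h ^ q * (P.filter fun σ => sat t σ).card := by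
      intro t ht
      set S' : Fin N → Finset A := fun x => if x ∈ vars t then {σd t x} else S x with hS'
      have hsub : Fintype.piFinset S' ⊆ P.filter fun σ => sat t σ := by
        intro σ hσ
        rw [Fintype.mem_piFinset] at hσ
        refine Finset.mem_filter.mpr ⟨?_, ?_⟩
        · rw [hP, Fintype.mem_piFinset]
          intro x
          have h1 := hσ x
          by_cases hx : x ∈ vars t
          · rw [hS'] at h1; simp only [if_pos hx, Finset.mem_singleton] at h1
            rw [h1]; exact hSmem t ht x hx
          · rw [hS'] at h1; simpa only [if_neg hx] using h1
        · refine (hlocal t σ (σd t) ?_).mpr (hσd t ht)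
          intro x hx
          have h1 := hσ x
          rw [hS'] at h1; simpa only [if_pos hx, Finset.mem_singleton] using h1
      have hcard' : (Fintype.piFinset S').card = ∏ x ∈ Finset.univ \ vars t, (S x).card := by
        rw [Fintype.card_piFinset]
        rw [← Finset.prod_sdiff (Finset.subset_univ (vars t))]
        have h1 : ∏ x ∈ vars t, (S' x).card = 1 := by
          apply Finset.prod_eq_one
          intro x hx; rw [hS']; simp [hx]
        have h2 : ∏ x ∈ Finset.univ \ vars t, (S' x).card
            = ∏ x ∈ Finset.univ \ vars t, (S x).card := by
          apply Finset.prod_congr rfl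
          intro x hx
          rw [Finset.mem_sdiff] at hx
          rw [hS']; simp [hx.2]
        rw [h1, h2, mul_one]
      have hsplit : ∏ x, (S x).card
          = (∏ x ∈ vars t, (S x).card) * ∏ x ∈ Finset.univ \ vars t, (S x).card := by
        rw [← Finset.prod_sdiff (Finset.subset_univ (vars t)), mul_comm]
      have hbound : ∏ x ∈ vars t, (S x).card ≤ h ^ q := by
        rw [← hq t]
        exact Finset.prod_le_pow_card _ _ _ (fun x hx => hScard t ht x hx)
      calc ∏ x, (S x).card
          = (∏ x ∈ vars t, (S x).card) * ∏ x ∈ Finset.univ \ vars t, (S x).card := hsplit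
        _ ≤ h ^ q * ∏ x ∈ Finset.univ \ vars t, (S x).card :=
            Nat.mul_le_mul_right _ hbound
        _ = h ^ q * (Fintype.piFinset S').card := by rw [hcard']
        _ ≤ h ^ q * (P.filter fun σ => sat t σ).card :=
            Nat.mul_le_mul_left _ (Finset.card_le_card hsub)
    have hsum : ∑ σ ∈ P, K ≤ ∑ σ ∈ P, h ^ q * (T.filter fun t => sat t σ).card := by
      have swap : ∑ t ∈ T, (P.filter fun σ => sat t σ).card
          = ∑ σ ∈ P, (T.filter fun t => sat t σ).card := by
        simp_rw [Finset.card_filter]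
        exact Finset.sum_comm
      calc ∑ σ ∈ P, K = P.card * K := by rw [Finset.sum_const, smul_eq_mul]
        _ ≤ P.card * T.card := Nat.mul_le_mul_left _ hK
        _ = ∑ t ∈ T, ∏ x, (S x).card := by
            rw [Finset.sum_const, smul_eq_mul, hPcard]; ring
        _ ≤ ∑ t ∈ T, h ^ q * (P.filter fun σ => sat t σ).card := Finset.sum_le_sum key
        _ = ∑ σ ∈ P, h ^ q * (T.filter fun t => sat t σ).card := by
            rw [← Finset.mul_sum, ← Finset.mul_sum, swap]
    have hPne : P.Nonempty := by
      rw [hP]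
      exact Fintype.piFinset_nonempty.mpr hSne
    obtain ⟨σ, hσP, hσ⟩ := Finset.exists_le_of_sum_le hPne hsum
    refine ⟨σ, ?_⟩
    have hcnt : (T.filter fun t => sat t σ).card ≤ Nat.card {t : Fin M // sat t σ} := by
      rw [Nat.card_eq_fintype_card, Fintype.card_subtype]
      exact Finset.card_le_card (fun t ht => Finset.mem_filter.mpr
        ⟨Finset.mem_univ t, (Finset.mem_filter.mp ht).2⟩)
    have hKle : K ≤ h ^ q * Nat.card {t : Fin M // sat t σ} :=
      le_trans hσ (Nat.mul_le_mul_left _ hcnt)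
    have hpos : (0 : ℝ) < (h : ℝ) ^ q := by
      have : (1 : ℕ) ≤ h ^ q := hqpos
      have := (Nat.one_le_cast (α := ℝ)).mpr this
      push_cast at this ⊢
      linarith
    rw [div_le_iff₀ hpos]
    have := (Nat.cast_le (α := ℝ)).mpr hKle
    push_cast at this
    linarith
end
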